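/- On H = ℓ²(ℕ) realized as a direct sum of 2-dimensional blocks, let R be the block-diagonal operator with blocks diag(1/n, 1) and J the block-diagonal operator with blocks [[0,-1],[1,0]]. Then there is no κ > 0 with R ≥ κI, but R + J R J* = diag-blocks diag(1 + 1/n, 1 + 1/n) ≥ I. Hence the hypocoercivity index of C = R − J equals 1 even though ker R = {0}. -/

import Mathlib

set_option maxHeartbeats 1000000


open ContinuousLinearMap
open scoped InnerProductSpace

private lemma lp_single_add' {α : Type*} [DecidableEq α] {E : α → Type*}
    [∀ i, NormedAddCommGroup (E i)] (p : ENNReal) (i : α) (a b : E i) :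
    lp.single p i (a + b) = lp.single p i a + lp.single p i b := by
  apply lp.ext
  funext j
  by_cases h : j = i
  · subst h
    simp [lp.single_apply_self]
  · simp [lp.single_apply_ne p i _ h]

/-- on `H = ⊕ₙ ℂ²`, with block-diagonal `R` (blocks `diag(1/n, 1)`) and `J`
(blocks `[[0,-1],[1,0]]`), `R` is not bounded below by any `κ I`, yet `R + J R J* ≥ I`;
hence `C = R − J` has hypocoercivity index 1 even though `ker R = {0}`. -/
theorem block_diagonal_hypocoercivity_index_one
    (R J : lp (fun _ : ℕ => EuclideanSpace ℂ (Fin 2)) 2 →L[ℂ]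
           lp (fun _ : ℕ => EuclideanSpace ℂ (Fin 2)) 2)
    (hRsa : R.IsPositive)
    (hJ : ContinuousLinearMap.adjoint J = -J)
    (hR0 : ∀ n : ℕ, R (lp.single 2 n (EuclideanSpace.single 0 (1 : ℂ))) =
      lp.single 2 n (EuclideanSpace.single 0 ((1 : ℂ) / (n + 1))))
    (hR1 : ∀ n : ℕ, R (lp.single 2 n (EuclideanSpace.single 1 (1 : ℂ))) =
      lp.single 2 n (EuclideanSpace.single 1 (1 : ℂ)))
    (hJ0 : ∀ n : ℕ, J (lp.single 2 n (EuclideanSpace.single 0 (1 : ℂ))) =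
      lp.single 2 n (EuclideanSpace.single 1 (1 : ℂ)))
    (hJ1 : ∀ n : ℕ, J (lp.single 2 n (EuclideanSpace.single 1 (1 : ℂ))) =
      -lp.single 2 n (EuclideanSpace.single 0 (1 : ℂ))) :
    (¬ ∃ κ : ℝ, 0 < κ ∧ ∀ x, κ * ‖x‖ ^ 2 ≤ (⟪R x, x⟫_ℂ).re) ∧
    (∀ x, ‖x‖ ^ 2 ≤ (⟪(R + J * R * ContinuousLinearMap.adjoint J) x, x⟫_ℂ).re) ∧
    IsLeast {m : ℕ | ∃ κ : ℝ, 0 < κ ∧ ∀ x,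
      κ * ‖x‖ ^ 2 ≤ (⟪(∑ j ∈ Finset.range (m + 1),
        (J ^ j) * R * (ContinuousLinearMap.adjoint J) ^ j) x, x⟫_ℂ).re} 1 ∧
    LinearMap.ker R.toLinearMap = ⊥ := by
  classical
  -- basic decomposition of a 2-vector
  have hdecomp : ∀ v : EuclideanSpace ℂ (Fin 2),
      v = v 0 • EuclideanSpace.single 0 (1 : ℂ) + v 1 • EuclideanSpace.single 1 (1 : ℂ) := by
    intro v
    ext j
    fin_cases j <;> simp [EuclideanSpace.single_apply]
  have hES : ∀ (i : Fin 2) (c : ℂ),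
      EuclideanSpace.single i c = c • EuclideanSpace.single i (1 : ℂ) := by
    intro i c
    ext j
    simp [EuclideanSpace.single_apply, mul_ite]
  have hsingle : ∀ (n : ℕ) (v : EuclideanSpace ℂ (Fin 2)),
      lp.single (E := fun _ : ℕ => EuclideanSpace ℂ (Fin 2)) 2 n v =
        v 0 • lp.single 2 n (EuclideanSpace.single 0 (1 : ℂ)) +
        v 1 • lp.single 2 n (EuclideanSpace.single 1 (1 : ℂ)) := by
    intro n v
    conv_lhs => rw [hdecomp v]
    rw [lp_single_add', lp.single_smul, lp.single_smul]
  -- action of R and J on a general single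
  have hR' : ∀ (n : ℕ) (v : EuclideanSpace ℂ (Fin 2)),
      R (lp.single 2 n v) =
        (v 0 * ((1 : ℂ) / (n + 1))) • lp.single 2 n (EuclideanSpace.single 0 (1 : ℂ)) +
        v 1 • lp.single 2 n (EuclideanSpace.single 1 (1 : ℂ)) := by
    intro n v
    rw [hsingle n v, map_add, map_smul, map_smul, hR0, hR1, hES 0 ((1 : ℂ) / (n + 1)),
      lp.single_smul, smul_smul]
  have hJ' : ∀ (n : ℕ) (v : EuclideanSpace ℂ (Fin 2)),
      J (lp.single 2 n v) =
        v 0 • lp.single 2 n (EuclideanSpace.single 1 (1 : ℂ)) -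
        v 1 • lp.single 2 n (EuclideanSpace.single 0 (1 : ℂ)) := by
    intro n v
    rw [hsingle n v, map_add, map_smul, map_smul, hJ0, hJ1, smul_neg, ← sub_eq_add_neg]
  -- self-adjointness facts
  have hRadj : ContinuousLinearMap.adjoint R = R := hRsa.isSelfAdjoint.adjoint_eq
  have hRsym : ∀ x s, ⟪R x, s⟫_ℂ = ⟪x, R s⟫_ℂ := by
    intro x s
    conv_lhs => rw [← hRadj]
    exact ContinuousLinearMap.adjoint_inner_left R s x
  set T : lp (fun _ : ℕ => EuclideanSpace ℂ (Fin 2)) 2 →L[ℂ]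
      lp (fun _ : ℕ => EuclideanSpace ℂ (Fin 2)) 2 :=
    R + J * R * ContinuousLinearMap.adjoint J with hTdef
  have hTsym : ∀ x s, ⟪T x, s⟫_ℂ = ⟪x, T s⟫_ℂ := by
    intro x s
    rw [hTdef]
    simp only [ContinuousLinearMap.add_apply, ContinuousLinearMap.mul_apply,
      inner_add_left, inner_add_right]
    congr 1
    · exact hRsym x s
    · calc ⟪J (R (ContinuousLinearMap.adjoint J x)), s⟫_ℂ
          = ⟪R (ContinuousLinearMap.adjoint J x), ContinuousLinearMap.adjoint J s⟫_ℂ :=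
            (ContinuousLinearMap.adjoint_inner_right J _ _).symm
        _ = ⟪ContinuousLinearMap.adjoint J x, R (ContinuousLinearMap.adjoint J s)⟫_ℂ :=
            hRsym _ _
        _ = ⟪x, J (R (ContinuousLinearMap.adjoint J s))⟫_ℂ :=
            ContinuousLinearMap.adjoint_inner_left J _ _
  -- block action of T
  have hTs : ∀ (n : ℕ) (v : EuclideanSpace ℂ (Fin 2)),
      T (lp.single 2 n v) =
        (((1 : ℝ) + 1 / (n + 1) : ℝ) : ℂ) • lp.single 2 n v := by
    intro n v
    have hadjJ : ContinuousLinearMap.adjoint J (lp.single 2 n v) =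
        v 1 • lp.single 2 n (EuclideanSpace.single 0 (1 : ℂ)) -
        v 0 • lp.single 2 n (EuclideanSpace.single 1 (1 : ℂ)) := by
      rw [hJ, ContinuousLinearMap.neg_apply, hJ' n v, neg_sub]
    have hcast : (((1 : ℝ) + 1 / (n + 1) : ℝ) : ℂ) = 1 + (1 : ℂ) / (n + 1) := by
      push_cast
      ring
    rw [hTdef, ContinuousLinearMap.add_apply, ContinuousLinearMap.mul_apply,
      ContinuousLinearMap.mul_apply, hadjJ, map_sub, map_smul, map_smul, hR0, hR1,
      hES 0 ((1 : ℂ) / (n + 1)), lp.single_smul, map_sub, map_smul, map_smul, map_smul,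
      hJ0, hJ1, hR' n v, hcast, hsingle n v]
    module
  -- the key hasSum identity for T
  have hTform : ∀ x : lp (fun _ : ℕ => EuclideanSpace ℂ (Fin 2)) 2,
      HasSum (fun n : ℕ => ((1 : ℝ) + 1 / (n + 1)) * (⟪x n, x n⟫_ℂ).re)
        ((⟪T x, x⟫_ℂ).re) := by
    intro x
    have h1 : HasSum (fun n : ℕ => lp.single 2 n (x n)) x :=
      lp.hasSum_single (by norm_num) x
    have h2 := h1.mapL (innerSL ℂ (T x))
    have h3 : (fun n : ℕ => ⟪T x, lp.single 2 n (x n)⟫_ℂ) =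
        fun n : ℕ => (((1 : ℝ) + 1 / (n + 1) : ℝ) : ℂ) * ⟪x n, x n⟫_ℂ := by
      funext n
      rw [hTsym, hTs, inner_smul_right, lp.inner_single_right]
    simp only [innerSL_apply_apply] at h2
    rw [h3] at h2
    have h4 := h2.mapL Complex.reCLM
    have h5 : (fun n : ℕ => Complex.reCLM ((((1 : ℝ) + 1 / (n + 1) : ℝ) : ℂ) * ⟪x n, x n⟫_ℂ)) =
        fun n : ℕ => ((1 : ℝ) + 1 / (n + 1)) * (⟪x n, x n⟫_ℂ).re := by
      funext n
      exact Complex.re_ofReal_mul _ _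
    rwa [h5] at h4
  have hnormsum : ∀ x : lp (fun _ : ℕ => EuclideanSpace ℂ (Fin 2)) 2,
      HasSum (fun n : ℕ => (⟪x n, x n⟫_ℂ).re) (‖x‖ ^ 2) := by
    intro x
    have h := (lp.hasSum_inner (𝕜 := ℂ) x x).mapL Complex.reCLM
    have h2 : Complex.reCLM ⟪x, x⟫_ℂ = ‖x‖ ^ 2 := by
      have := inner_self_eq_norm_sq (𝕜 := ℂ) x
      rwa [RCLike.re_to_complex] at this
    rwa [h2] at h
  -- Part 2
  have part2 : ∀ x, ‖x‖ ^ 2 ≤ (⟪T x, x⟫_ℂ).re := by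
    intro x
    refine hasSum_le (fun n => ?_) (hnormsum x) (hTform x)
    have h0 : (0 : ℝ) ≤ (⟪x n, x n⟫_ℂ).re := by
      have := inner_self_nonneg (𝕜 := ℂ) (x := x n)
      rwa [RCLike.re_to_complex] at this
    have h1 : (0 : ℝ) ≤ 1 / ((n : ℝ) + 1) := by positivity
    nlinarith
  -- Part 1
  have part1 : ¬ ∃ κ : ℝ, 0 < κ ∧ ∀ x, κ * ‖x‖ ^ 2 ≤ (⟪R x, x⟫_ℂ).re := by
    rintro ⟨κ, hκ, h⟩
    obtain ⟨n, hn⟩ := exists_nat_gt (1 / κ)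
    have hx := h (lp.single 2 n (EuclideanSpace.single 0 (1 : ℂ)))
    have hnorm : ‖lp.single (E := fun _ : ℕ => EuclideanSpace ℂ (Fin 2)) 2 n
        (EuclideanSpace.single 0 (1 : ℂ))‖ = 1 := by
      have := lp.norm_single (E := fun _ : ℕ => EuclideanSpace ℂ (Fin 2)) (p := 2) (by norm_num)
        n (EuclideanSpace.single 0 (1 : ℂ) : EuclideanSpace ℂ (Fin 2))
      simpa using this
    have hinner : (⟪R (lp.single 2 n (EuclideanSpace.single 0 (1 : ℂ))),
        lp.single (E := fun _ : ℕ => EuclideanSpace ℂ (Fin 2)) 2 n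
          (EuclideanSpace.single 0 (1 : ℂ))⟫_ℂ).re = 1 / ((n : ℝ) + 1) := by
      rw [hR0 n, lp.inner_single_left, lp.single_apply_self,
        EuclideanSpace.inner_single_left]
      have hc : ((1 : ℂ) / (↑n + 1)) = (((1 : ℝ) / (n + 1) : ℝ) : ℂ) := by
        push_cast
        ring
      rw [hc, Complex.conj_ofReal]
      have h10 : (EuclideanSpace.single 0 (1 : ℂ) : EuclideanSpace ℂ (Fin 2)) 0 = 1 := by
        simp [EuclideanSpace.single_apply]
      rw [h10, mul_one, Complex.ofReal_re]
    rw [hnorm, hinner] at hx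
    have hpos : (0 : ℝ) < (n : ℝ) + 1 := by positivity
    rw [one_pow, mul_one, le_div_iff₀ hpos] at hx
    rw [div_lt_iff₀ hκ] at hn
    nlinarith
  refine ⟨part1, fun x => part2 x, ⟨?_, ?_⟩, ?_⟩
  · -- 1 is in the set
    refine ⟨1, one_pos, fun x => ?_⟩
    have hsum : (∑ j ∈ Finset.range 2,
        (J ^ j) * R * (ContinuousLinearMap.adjoint J) ^ j) = T := by
      rw [hTdef]
      simp [Finset.sum_range_succ]
    rw [hsum, one_mul]
    exact part2 x
  · -- lower bound
    intro m hm
    by_contra hcon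
    push_neg at hcon
    have hm0 : m = 0 := by omega
    subst hm0
    obtain ⟨κ, hκ, hk⟩ := hm
    refine part1 ⟨κ, hκ, fun x => ?_⟩
    have := hk x
    simpa [Finset.sum_range_one] using this
  · -- ker R = ⊥
    rw [Submodule.eq_bot_iff]
    intro x hx
    have hx0 : R x = 0 := hx
    have hz : ∀ n : ℕ, ⟪x, R (lp.single 2 n (x n))⟫_ℂ = 0 := by
      intro n
      rw [← hRsym, hx0, inner_zero_left]
    have hn0 : ∀ n : ℕ, (x n : EuclideanSpace ℂ (Fin 2)) = 0 := by
      intro n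
      have h := hz n
      rw [hR' n (x n), inner_add_right, inner_smul_right, inner_smul_right,
        lp.inner_single_right, lp.inner_single_right,
        EuclideanSpace.inner_single_right, EuclideanSpace.inner_single_right] at h
      have hre := congrArg Complex.re h
      have hre' : (1 / ((n : ℝ) + 1)) * Complex.normSq (x n 0) + Complex.normSq (x n 1) = 0 := by
        have hc : ((1 : ℂ) / (↑n + 1)) = (((1 : ℝ) / (n + 1) : ℝ) : ℂ) := by
          push_cast
          ring
        have he : x n 0 * (1 : ℂ) / (↑n + 1) * (1 * (starRingEnd ℂ) (x n 0)) +
            x n 1 * (1 * (starRingEnd ℂ) (x n 1)) =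
            (((1 : ℝ) / (n + 1) : ℝ) : ℂ) * (x n 0 * (starRingEnd ℂ) (x n 0)) +
            x n 1 * (starRingEnd ℂ) (x n 1) := by
          rw [← hc]; ring
        rw [show x n 0 * ((1 : ℂ) / (↑n + 1)) * (1 * (starRingEnd ℂ) (x n 0)) +
            x n 1 * (1 * (starRingEnd ℂ) (x n 1)) =
            (((1 : ℝ) / (n + 1) : ℝ) : ℂ) * (x n 0 * (starRingEnd ℂ) (x n 0)) +
            x n 1 * (starRingEnd ℂ) (x n 1) from by rw [← hc]; ring,
          Complex.mul_conj, Complex.mul_conj, ← Complex.ofReal_mul, ← Complex.ofReal_add] at h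
        exact_mod_cast h
      have h1 : (0 : ℝ) < 1 / ((n : ℝ) + 1) := by positivity
      have h2 : (0 : ℝ) ≤ Complex.normSq (x n 0) := Complex.normSq_nonneg _
      have h3 : (0 : ℝ) ≤ Complex.normSq (x n 1) := Complex.normSq_nonneg _
      have ha : x n 0 = 0 := by
        rw [← Complex.normSq_eq_zero]
        nlinarith
      have hb : x n 1 = 0 := by
        rw [← Complex.normSq_eq_zero]
        nlinarith
      ext j
      fin_cases j
      · simpa using ha
      · simpa using hb
    apply lp.ext
    funext n
    simpa using hn0 n
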